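/- Let d ≥ 2 and d' ≥ 2 be integers and let G be a partial geometry pg(s,t,α) with parameters s = d(d'−1), t = d'(d−1), α = (d−1)(d'−1). Then G is isomorphic to a partial geometry arising via the Thas–Wallis construction from a maximal arc of degree d in some projective plane of order q = dd' if and only if both of the following hold: (i) G admits a set of d(dd'−d'+1) pairwise orthogonal parallel classes of lines, and (ii) the dual geometry G' admits a set of d'(dd'−d+1) pairwise orthogonal parallel classes of lines. -/

import Mathlib

/-- A partial geometry `pg(s,t,α)`: a finite incidence structure of points `P`
and lines `L` (with incidence relation `I`) such that
(1) two distinct points are on at most one common line,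
(2) every line has exactly `s+1` points (`s ≥ 1`),
(3) every point is on exactly `t+1` lines (`t ≥ 1`),
(4) for every non-incident point-line pair `(p, l)` there are exactly `a ≥ 1`
lines through `p` meeting `l`. -/
def IsPartialGeometry {P L : Type*} (I : P → L → Prop) (s t a : ℕ) : Prop :=
  Finite P ∧ Finite L ∧ 1 ≤ s ∧ 1 ≤ t ∧ 1 ≤ a ∧
  (∀ p q : P, p ≠ q → {l : L | I p l ∧ I q l}.ncard ≤ 1) ∧
  (∀ l : L, {p : P | I p l}.ncard = s + 1) ∧
  (∀ p : P, {l : L | I p l}.ncard = t + 1) ∧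
  (∀ (p : P) (l : L), ¬ I p l →
    {m : L | I p m ∧ ∃ q : P, I q m ∧ I q l}.ncard = a)

/-- A parallel class of an incidence structure: a set of pairwise disjoint
lines that covers the point set. -/
def IsParallelClass {P L : Type*} (I : P → L → Prop) (c : Set L) : Prop :=
  (∀ p : P, ∃ l ∈ c, I p l) ∧
  (∀ l ∈ c, ∀ m ∈ c, l ≠ m → ∀ p : P, ¬ (I p l ∧ I p m))

/-- A (finite) projective plane of order `q`: any two distinct points are on
exactly one common line, any two distinct lines meet in exactly one point,
every line has exactly `q+1` points and every point is on exactly `q+1`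
lines. -/
def IsProjectivePlane {X Λ : Type*} (I : X → Λ → Prop) (q : ℕ) : Prop :=
  Finite X ∧ Finite Λ ∧
  (∀ x y : X, x ≠ y → {l : Λ | I x l ∧ I y l}.ncard = 1) ∧
  (∀ l m : Λ, l ≠ m → {x : X | I x l ∧ I x m}.ncard = 1) ∧
  (∀ l : Λ, {x : X | I x l}.ncard = q + 1) ∧
  (∀ x : X, {l : Λ | I x l}.ncard = q + 1)

/-- A maximal arc of degree `d` in a projective plane of order `q`: a set `A`
of `dq - q + d` points such that every line is either disjoint from `A` or
meets `A` in exactly `d` points. -/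
def IsMaximalArc {X Λ : Type*} (I : X → Λ → Prop) (q d : ℕ) (A : Set X) : Prop :=
  A.ncard = d * q - q + d ∧
  ∀ l : Λ, (∀ x ∈ A, ¬ I x l) ∨ {x ∈ A | I x l}.ncard = d

/-- Points of the Thas–Wallis partial geometry arising from a maximal arc `A`:
the points of the plane not in `A`. -/
abbrev TWpoints {X : Type*} (A : Set X) : Type _ := {x : X // x ∉ A}

/-- Lines of the Thas–Wallis partial geometry arising from a maximal arc `A`:
the lines of the plane meeting `A`. -/
abbrev TWlines {X Λ : Type*} (I : X → Λ → Prop) (A : Set X) : Type _ :=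
  {l : Λ // ∃ x ∈ A, I x l}

/-- Incidence in the Thas–Wallis partial geometry: inherited from the plane. -/
abbrev TWinc {X Λ : Type*} (I : X → Λ → Prop) (A : Set X) :
    TWpoints A → TWlines I A → Prop :=
  fun p l => I p.1 l.1
open scoped Classical
open scoped Classical

lemma dcount {A B : Type*} (s : Finset A) (t : Finset B) (R : A → B → Prop)
    [∀ a b, Decidable (R a b)] :
    ∑ a ∈ s, (t.filter (R a ·)).card = ∑ b ∈ t, (s.filter (R · b)).card := by
  simp only [Finset.card_filter]
  exact Finset.sum_comm

lemma ncard_unique {X : Type*} {S : Set X} {x : X} (hx : x ∈ S) (hu : ∀ y ∈ S, y = x) :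
    S.ncard = 1 := by
  have : S = {x} := Set.eq_singleton_iff_unique_mem.2 ⟨hx, hu⟩
  simp [this]

lemma eq_of_ncard_le_one {X : Type*} {S : Set X} (hf : S.Finite) (h : S.ncard ≤ 1)
    {a b : X} (ha : a ∈ S) (hb : b ∈ S) : a = b := by
  by_contra hne
  have : 1 < S.ncard := (Set.one_lt_ncard_iff hf).2 ⟨a, b, ha, hb, hne⟩
  omega

lemma exists_pair_of_ncard {X : Type*} {S : Set X} (hf : S.Finite) (h : 2 ≤ S.ncard) :
    ∃ a b, a ∈ S ∧ b ∈ S ∧ a ≠ b :=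
  (Set.one_lt_ncard_iff hf).1 (by omega)

lemma dc_mul {A B : Type*} [Fintype A] [Fintype B] (S : Set A) (T : Set B)
    (R : A → B → Prop) (m n : ℕ)
    (h1 : ∀ a ∈ S, {b ∈ T | R a b}.ncard = m)
    (h2 : ∀ b ∈ T, {a ∈ S | R a b}.ncard = n) :
    S.ncard * m = T.ncard * n := by
  classical
  have key := dcount S.toFinset T.toFinset R
  have e1 : ∀ a ∈ S.toFinset, (T.toFinset.filter (R a ·)).card = m := by
    intro a ha
    rw [Set.mem_toFinset] at ha
    have := h1 a ha
    rw [Set.ncard_eq_toFinset_card'] at this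
    rw [← this]
    congr 1
    ext b
    simp [Set.mem_toFinset]
  have e2 : ∀ b ∈ T.toFinset, (S.toFinset.filter (R · b)).card = n := by
    intro b hb
    rw [Set.mem_toFinset] at hb
    have := h2 b hb
    rw [Set.ncard_eq_toFinset_card'] at this
    rw [← this]
    congr 1
    ext a
    simp [Set.mem_toFinset]
  rw [Finset.sum_congr rfl e1, Finset.sum_congr rfl e2] at key
  simpa [Set.ncard_eq_toFinset_card', mul_comm] using key

section PG
variable {P L : Type*} {I : P → L → Prop} {s t a : ℕ}

lemma pg_two_lines (h : IsPartialGeometry I s t a) {l m : L} (hlm : l ≠ m)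
    {x y : P} (hxl : I x l) (hxm : I x m) (hyl : I y l) (hym : I y m) : x = y := by
  by_contra hxy
  haveI : Finite L := h.2.1
  have := h.2.2.2.2.2.1 x y hxy
  exact hlm (eq_of_ncard_le_one (Set.toFinite _) this ⟨hxl, hyl⟩ ⟨hxm, hym⟩)

lemma pg_dual_alpha (h : IsPartialGeometry I s t a) (p : P) (l : L) (hpl : ¬ I p l) :
    {x : P | I x l ∧ ∃ n, I x n ∧ I p n}.ncard = a := by
  haveI : Finite P := h.1
  haveI : Finite L := h.2.1
  haveI : Fintype P := Fintype.ofFinite P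
  haveI : Fintype L := Fintype.ofFinite L
  have haxiom := h.2.2.2.2.2.2.2.2 p l hpl
  have key := dc_mul {m : L | I p m ∧ ∃ q, I q m ∧ I q l}
      {x : P | I x l ∧ ∃ n, I x n ∧ I p n} (fun m x => I x m) 1 1 ?_ ?_
  · simpa [haxiom] using key.symm
  · rintro m ⟨hpm, q, hqm, hql⟩
    have hml : m ≠ l := fun e => hpl (e ▸ hpm)
    refine ncard_unique (x := q) ⟨⟨hql, m, hqm, hpm⟩, hqm⟩ ?_
    rintro y ⟨⟨hyl, -⟩, hym⟩
    exact pg_two_lines h hml hym hyl hqm hql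
  · rintro x ⟨hxl, n, hxn, hpn⟩
    have hpx : p ≠ x := fun e => hpl (e ▸ hxl)
    refine ncard_unique (x := n) ⟨⟨hpn, x, hxn, hxl⟩, hxn⟩ ?_
    rintro m ⟨⟨hpm, -⟩, hxm⟩
    exact eq_of_ncard_le_one (Set.toFinite _) (h.2.2.2.2.2.1 p x hpx)
      (⟨hpm, hxm⟩ : m ∈ {l' : L | I p l' ∧ I x l'}) ⟨hpn, hxn⟩

lemma pg_dual (h : IsPartialGeometry I s t a) :
    IsPartialGeometry (fun (l : L) (p : P) => I p l) t s a := by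
  obtain ⟨h1, h2, h3, h4, h5, h6, h7, h8, h9⟩ := h
  refine ⟨h2, h1, h4, h3, h5, ?_, h8, h7, ?_⟩
  · intro l m hlm
    haveI : Finite P := h1
    rw [Set.ncard_le_one_iff_eq (Set.toFinite _)]
    by_cases hE : ({p : P | I p l ∧ I p m} : Set P) = ∅
    · left; exact hE
    · right
      obtain ⟨x, hx⟩ := Set.nonempty_iff_ne_empty.2 hE
      refine ⟨x, Set.eq_singleton_iff_unique_mem.2 ⟨hx, ?_⟩⟩
      intro y hy
      exact pg_two_lines ⟨h1,h2,h3,h4,h5,h6,h7,h8,h9⟩ hlm hy.1 hy.2 hx.1 hx.2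
  · intro l p hpl
    have := pg_dual_alpha ⟨h1,h2,h3,h4,h5,h6,h7,h8,h9⟩ p l hpl
    rw [← this]

lemma pg_vcount (h : IsPartialGeometry I s t a) (l₀ : L) :
    {p : P | ¬ I p l₀}.ncard * a = (s+1) * (t*s) := by
  haveI : Finite P := h.1
  haveI : Finite L := h.2.1
  haveI : Fintype P := Fintype.ofFinite P
  haveI : Fintype L := Fintype.ofFinite L
  -- inner count
  have inner : ∀ x : P, I x l₀ →
      {p : P | ¬ I p l₀ ∧ ∃ n, I x n ∧ I p n}.ncard = t * s := by
    intro x hx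
    have hT : ({n : L | I x n ∧ n ≠ l₀} : Set L).ncard = t := by
      have : ({n : L | I x n ∧ n ≠ l₀} : Set L) = {n : L | I x n} \ {l₀} := by
        ext n; simp [Set.mem_diff, and_comm]
      rw [this, Set.ncard_diff_singleton_of_mem (s := {n : L | I x n}) hx, h.2.2.2.2.2.2.2.1 x]
      simp
    have key := dc_mul {p : P | ¬ I p l₀ ∧ ∃ n, I x n ∧ I p n}
        {n : L | I x n ∧ n ≠ l₀} (fun p n => I p n) 1 s ?_ ?_
    · rw [hT] at key; simpa using key
    · rintro p ⟨hpl₀, n₀, hxn₀, hpn₀⟩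
      refine ncard_unique (x := n₀) ⟨⟨hxn₀, fun e => hpl₀ (e ▸ hpn₀)⟩, hpn₀⟩ ?_
      rintro n ⟨⟨hxn, -⟩, hpn⟩
      have hxp : x ≠ p := fun e => hpl₀ (e ▸ hx)
      exact eq_of_ncard_le_one (Set.toFinite _) (h.2.2.2.2.2.1 x p hxp)
        (⟨hxn, hpn⟩ : n ∈ {l' : L | I x l' ∧ I p l'}) ⟨hxn₀, hpn₀⟩
    · rintro n ⟨hxn, hnl₀⟩
      have : {p : P | p ∈ {p' : P | ¬ I p' l₀ ∧ ∃ n', I x n' ∧ I p' n'} ∧ I p n} = {p : P | I p n} \ {x} := by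
        ext p
        simp only [Set.mem_setOf_eq, Set.mem_diff, Set.mem_singleton_iff]
        constructor
        · rintro ⟨⟨hpl₀, -⟩, hpn⟩
          exact ⟨hpn, fun e => hpl₀ (e ▸ hx)⟩
        · rintro ⟨hpn, hpx⟩
          have hpl₀ : ¬ I p l₀ := fun hl => hpx (pg_two_lines h hnl₀ hpn hl hxn hx)
          exact ⟨⟨hpl₀, n, hxn, hpn⟩, hpn⟩
      rw [this, Set.ncard_diff_singleton_of_mem (s := {p : P | I p n}) hxn, h.2.2.2.2.2.2.1 n]
      simp
  have key := dc_mul {p : P | ¬ I p l₀} {x : P | I x l₀}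
      (fun p x => ∃ n, I x n ∧ I p n) a (t*s) ?_ ?_
  · rw [h.2.2.2.2.2.2.1 l₀] at key; exact key
  · intro p hp
    have e : {x : P | x ∈ {x' : P | I x' l₀} ∧ ∃ n, I x n ∧ I p n}
        = {x : P | I x l₀ ∧ ∃ n, I x n ∧ I p n} := by
      ext x; simp only [Set.mem_setOf_eq]
    rw [e]
    exact pg_dual_alpha h p l₀ hp
  · intro x hx
    have e : {p : P | p ∈ {p' : P | ¬ I p' l₀} ∧ ∃ n, I x n ∧ I p n}
        = {p : P | ¬ I p l₀ ∧ ∃ n, I x n ∧ I p n} := by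
      ext p; simp only [Set.mem_setOf_eq]
    rw [e]
    exact inner x hx

lemma pg_meet_count (h : IsPartialGeometry I s t a) (l₀ : L) :
    {m : L | m ≠ l₀ ∧ ∃ x, I x m ∧ I x l₀}.ncard = (s+1) * t := by
  haveI : Finite P := h.1
  haveI : Finite L := h.2.1
  haveI : Fintype P := Fintype.ofFinite P
  haveI : Fintype L := Fintype.ofFinite L
  have key := dc_mul {m : L | m ≠ l₀ ∧ ∃ x, I x m ∧ I x l₀} {x : P | I x l₀}
      (fun m x => I x m) 1 t ?_ ?_
  · rw [h.2.2.2.2.2.2.1 l₀] at key; simpa using key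
  · rintro m ⟨hml₀, x, hxm, hxl₀⟩
    refine ncard_unique (x := x) ⟨hxl₀, hxm⟩ ?_
    rintro y ⟨hyl₀, hym⟩
    exact pg_two_lines h hml₀ hym hyl₀ hxm hxl₀
  · intro x hx
    simp only [Set.mem_setOf_eq] at hx
    have : {m : L | m ∈ {m' : L | m' ≠ l₀ ∧ ∃ x', I x' m' ∧ I x' l₀} ∧ I x m} = {m : L | I x m} \ {l₀} := by
      ext m
      simp only [Set.mem_setOf_eq, Set.mem_diff, Set.mem_singleton_iff]
      constructor
      · rintro ⟨⟨hml₀, -⟩, hxm⟩; exact ⟨hxm, hml₀⟩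
      · rintro ⟨hxm, hml₀⟩; exact ⟨⟨hml₀, x, hxm, hx⟩, hxm⟩
    rw [this, Set.ncard_diff_singleton_of_mem (s := {n : L | I x n}) hx, h.2.2.2.2.2.2.2.1 x]
    simp

lemma pg_class_count (h : IsPartialGeometry I s t a) {c : Set L}
    (hc : IsParallelClass I c) : c.ncard * (s+1) = Nat.card P := by
  haveI : Finite P := h.1
  haveI : Finite L := h.2.1
  haveI : Fintype P := Fintype.ofFinite P
  haveI : Fintype L := Fintype.ofFinite L
  have key := dc_mul c (Set.univ : Set P) (fun l p => I p l) (s+1) 1 ?_ ?_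
  · rw [Set.ncard_univ] at key; simpa using key
  · intro l hl
    rw [← h.2.2.2.2.2.2.1 l]
    congr 1
    ext p; simp
  · intro p _
    obtain ⟨l, hlc, hpl⟩ := hc.1 p
    refine ncard_unique (x := l) ⟨hlc, hpl⟩ ?_
    rintro m ⟨hmc, hpm⟩
    by_contra hml
    exact hc.2 m hmc l hlc hml p ⟨hpm, hpl⟩

lemma filter_univ_card {X : Type*} [Fintype X] (S : Set X) :
    (Finset.univ.filter (· ∈ S)).card = S.ncard := by
  classical
  rw [Set.ncard_eq_toFinset_card']
  congr 1
  ext x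
  simp

lemma classes_regular {L : Type*} [Fintype L] (C : Set (Set L)) (w dd : ℕ)
    (hsize : ∀ c ∈ C, c.ncard = w)
    (horth : ∀ c ∈ C, ∀ c' ∈ C, c ≠ c' → (c ∩ c').ncard = 1)
    (hident : C.ncard * C.ncard + C.ncard * w + dd * dd * (Fintype.card L)
      = C.ncard + 2 * dd * (C.ncard * w))
    (l : L) : {c ∈ C | l ∈ c}.ncard = dd := by
  classical
  set CF : Finset (Set L) := C.toFinset with hCF
  set K := C.ncard with hK
  have hKCF : CF.card = K := (Set.ncard_eq_toFinset_card' C).symm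
  set n : L → ℕ := fun l => (CF.filter (l ∈ ·)).card with hn
  -- first sum
  have S1 : ∑ l : L, n l = K * w := by
    rw [hn]
    rw [dcount Finset.univ CF (fun l c => l ∈ c)]
    rw [Finset.sum_congr rfl (fun c hc => ?_), Finset.sum_const, hKCF, smul_eq_mul]
    rw [filter_univ_card]
    exact hsize c (by simpa [hCF, Set.mem_toFinset] using hc)
  -- second sum
  have S2 : ∑ l : L, (n l * n l - n l) = K * K - K := by
    have e1 : ∀ l : L, CF.offDiag.filter (fun p => l ∈ p.1 ∧ l ∈ p.2)
        = (CF.filter (l ∈ ·)).offDiag := by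
      intro l
      ext p
      simp only [Finset.mem_filter, Finset.mem_offDiag]
      tauto
    have hfib : ∀ p ∈ CF.offDiag, (Finset.univ.filter (fun x => x ∈ p.1 ∧ x ∈ p.2)).card = 1 := by
      intro p hp
      rw [Finset.mem_offDiag] at hp
      have h1 := horth p.1 (by simpa [hCF, Set.mem_toFinset] using hp.1)
        p.2 (by simpa [hCF, Set.mem_toFinset] using hp.2.1) hp.2.2
      rw [← h1, ← filter_univ_card]
      congr 1
      ext x
      simp [Set.mem_inter_iff]
    have key := dcount Finset.univ CF.offDiag (fun l p => l ∈ p.1 ∧ l ∈ p.2)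
    have key2 : ∑ b ∈ CF.offDiag,
        (Finset.univ.filter (fun x => x ∈ b.1 ∧ x ∈ b.2)).card = K * K - K := by
      rw [Finset.sum_congr rfl hfib, Finset.sum_const, smul_eq_mul, mul_one,
        Finset.offDiag_card, hKCF]
    calc ∑ l : L, (n l * n l - n l)
        = ∑ l : L, (CF.offDiag.filter (fun p => l ∈ p.1 ∧ l ∈ p.2)).card := by
          refine Finset.sum_congr rfl fun l _ => ?_
          rw [e1 l, Finset.offDiag_card]
      _ = K * K - K := key.trans key2
  have S3 : ∑ l : L, n l * n l = (K * K - K) + K * w := by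
    rw [← S2, ← S1, ← Finset.sum_add_distrib]
    refine Finset.sum_congr rfl fun l _ => ?_
    rcases Nat.eq_zero_or_pos (n l) with h | h
    · simp [h]
    · have := Nat.le_mul_of_pos_left (n l) h
      omega
  have hKK : K ≤ K * K := by nlinarith
  -- sum of squares is zero
  have SZ : ∑ l : L, ((n l : ℤ) - dd)^2 = 0 := by
    calc ∑ l : L, ((n l : ℤ) - dd)^2
        = ∑ l : L, (((n l:ℤ) * n l) - 2 * dd * ((n l : ℤ)) + dd * dd) :=
          Finset.sum_congr rfl fun l _ => by ring
      _ = ((∑ l : L, ((n l:ℤ) * n l)) - (∑ l : L, 2 * dd * ((n l : ℤ))))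
            + ∑ _l : L, ((dd : ℤ) * dd) := by
          rw [Finset.sum_add_distrib, Finset.sum_sub_distrib]
      _ = 0 := by
          rw [← Finset.mul_sum, Finset.sum_const, nsmul_eq_mul]
          have c1 : (∑ l : L, ((n l:ℤ) * n l)) = (((K * K - K) + K * w : ℕ) : ℤ) := by
            rw [← S3]; push_cast; rfl
          have c2 : (∑ l : L, ((n l : ℤ))) = ((K * w : ℕ) : ℤ) := by
            rw [← S1]; push_cast; rfl
          rw [c1, c2]
          have hident' : (K : ℤ) * K + K * w + dd * dd * (Fintype.card L)
              = K + 2 * dd * (K * w) := by exact_mod_cast hident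
          simp only [Finset.card_univ]
          push_cast [Nat.cast_sub hKK]
          linarith
  have each : ∀ l : L, n l = dd := by
    intro l'
    have hnn : ∀ l ∈ Finset.univ, (0:ℤ) ≤ ((n l : ℤ) - dd)^2 := fun l _ => sq_nonneg _
    have := (Finset.sum_eq_zero_iff_of_nonneg hnn).1 SZ l' (Finset.mem_univ _)
    have : ((n l' : ℤ) - dd) = 0 := by
      exact pow_eq_zero_iff (n := 2) (by norm_num) |>.1 this
    omega
  rw [← each l, hn]
  rw [Set.ncard_eq_toFinset_card']
  congr 1
  ext c
  simp [hCF, Set.mem_toFinset]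

lemma class_of_disjoint {P L : Type*} {I : P → L → Prop} {s t a : ℕ}
    (h : IsPartialGeometry I s t a) (C : Set (Set L)) (w dd : ℕ)
    (hpar : ∀ c ∈ C, IsParallelClass I c)
    (hsize : ∀ c ∈ C, c.ncard = w + 1)
    (horth : ∀ c ∈ C, ∀ c' ∈ C, c ≠ c' → (c ∩ c').ncard = 1)
    (hreg : ∀ l : L, {c ∈ C | l ∈ c}.ncard = dd)
    (hb : Nat.card L = 1 + (s+1)*t + dd * w)
    {l m : L} (hlm : l ≠ m) (hdisj : ∀ p, ¬ (I p l ∧ I p m)) :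
    ∃ c ∈ C, l ∈ c ∧ m ∈ c := by
  classical
  haveI : Finite P := h.1
  haveI : Finite L := h.2.1
  haveI : Fintype P := Fintype.ofFinite P
  haveI : Fintype L := Fintype.ofFinite L
  set E : Finset L := Finset.univ.erase l with hE
  set M : Finset L := E.filter (fun m' => ∃ p, I p m' ∧ I p l) with hM
  set D : Finset L := E.filter (fun m' => ¬ ∃ p, I p m' ∧ I p l) with hD
  have hMD : M.card + D.card = E.card := Finset.card_filter_add_card_filter_not _
  have hEcard : E.card = Fintype.card L - 1 := by
    rw [hE, Finset.card_erase_of_mem (Finset.mem_univ l), Finset.card_univ]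
  have hMcard : M.card = (s+1)*t := by
    rw [← pg_meet_count h l, ← filter_univ_card]
    congr 1
    ext m'
    simp only [hM, hE, Finset.mem_filter, Finset.mem_erase, Finset.mem_univ, true_and,
      Set.mem_setOf_eq, and_true]
  have hL1 : 1 ≤ Fintype.card L := Fintype.card_pos_iff.2 ⟨l⟩
  have hbc : Fintype.card L = 1 + (s+1)*t + dd * w := by
    rw [← Nat.card_eq_fintype_card]; exact hb
  have hDcard : D.card = dd * w := by omega
  set CL : Finset (Set L) := C.toFinset.filter (l ∈ ·) with hCL
  have hCLcard : CL.card = dd := by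
    rw [← hreg l, ← filter_univ_card]
    congr 1
    ext c
    simp [hCL, Set.mem_toFinset]
  set T : Finset L := CL.biUnion (fun c => c.toFinset.erase l) with hT
  have hmemCL : ∀ c ∈ CL, c ∈ C ∧ l ∈ c := by
    intro c hc
    rw [hCL, Finset.mem_filter, Set.mem_toFinset] at hc
    exact hc
  have hTcard : T.card = dd * w := by
    rw [hT, Finset.card_biUnion, Finset.sum_congr rfl (fun c hc => ?_), Finset.sum_const,
      hCLcard, smul_eq_mul]
    · obtain ⟨hcC, hlc⟩ := hmemCL c hc
      rw [Finset.card_erase_of_mem (Set.mem_toFinset.2 hlc), ← Set.ncard_eq_toFinset_card',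
        hsize c hcC]
      simp
    · intro c hc c' hc' hcc'
      rw [Function.onFun, Finset.disjoint_left]
      intro x hx hx'
      rw [Finset.mem_erase, Set.mem_toFinset] at hx hx'
      have h1 := horth c (hmemCL c hc).1 c' (hmemCL c' hc').1 hcc'
      exact hx.1 (eq_of_ncard_le_one (Set.toFinite _) h1.le
        (⟨hx.2, hx'.2⟩ : x ∈ c ∩ c') ⟨(hmemCL c hc).2, (hmemCL c' hc').2⟩)
  have hTD : T ⊆ D := by
    intro x hx
    rw [hT, Finset.mem_biUnion] at hx
    obtain ⟨c, hc, hxc⟩ := hx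
    rw [Finset.mem_erase, Set.mem_toFinset] at hxc
    obtain ⟨hcC, hlc⟩ := hmemCL c hc
    rw [hD, Finset.mem_filter, hE, Finset.mem_erase]
    refine ⟨⟨hxc.1, Finset.mem_univ _⟩, ?_⟩
    rintro ⟨p, hpx, hpl⟩
    exact (hpar c hcC).2 x hxc.2 l hlc hxc.1 p ⟨hpx, hpl⟩
  have hTeq : T = D := Finset.eq_of_subset_of_card_le hTD (by omega)
  have hmD : m ∈ D := by
    rw [hD, Finset.mem_filter, hE, Finset.mem_erase]
    refine ⟨⟨hlm.symm, Finset.mem_univ _⟩, ?_⟩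
    rintro ⟨p, hpm, hpl⟩
    exact hdisj p ⟨hpl, hpm⟩
  rw [← hTeq, hT, Finset.mem_biUnion] at hmD
  obtain ⟨c, hc, hmc⟩ := hmD
  rw [Finset.mem_erase, Set.mem_toFinset] at hmc
  exact ⟨c, (hmemCL c hc).1, (hmemCL c hc).2, hmc.2⟩

lemma ncard_one_unique {X : Type*} {S : Set X} (h : S.ncard = 1) :
    ∃ x ∈ S, ∀ y ∈ S, y = x := by
  obtain ⟨x, hx⟩ := Set.ncard_eq_one.1 h
  exact ⟨x, hx ▸ rfl, fun y hy => by rw [hx] at hy; exact hy⟩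

section PP
variable {X Λ : Type*} {J : X → Λ → Prop} {q : ℕ}

lemma pp_card_lines (hJ : IsProjectivePlane J q) (l₀ : Λ) :
    Nat.card Λ = q*q + q + 1 := by
  haveI : Finite X := hJ.1
  haveI : Finite Λ := hJ.2.1
  haveI : Fintype X := Fintype.ofFinite X
  haveI : Fintype Λ := Fintype.ofFinite Λ
  have key := dc_mul {m : Λ | m ≠ l₀} {x : X | J x l₀} (fun m x => J x m) 1 q ?_ ?_
  · have hcompl : ({m : Λ | m ≠ l₀} : Set Λ) = ({l₀}ᶜ : Set Λ) := by
      ext m; simp [Set.mem_compl_iff]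
    rw [hcompl, hJ.2.2.2.2.1 l₀] at key
    have := Set.ncard_add_ncard_compl ({l₀} : Set Λ) (Set.toFinite _)
    rw [Set.ncard_singleton] at this
    rw [Nat.card_eq_fintype_card] at this ⊢
    have h2 : (q+1)*q = q*q + q := by ring
    omega
  · intro m hm
    have h1 := hJ.2.2.2.1 l₀ m (fun e => hm (e.symm))
    rw [← h1]
    congr 1
  · intro x hx
    have : {m : Λ | m ∈ {m' : Λ | m' ≠ l₀} ∧ J x m} = {m : Λ | J x m} \ {l₀} := by
      ext m
      simp only [Set.mem_setOf_eq, Set.mem_diff, Set.mem_singleton_iff]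
      tauto
    rw [this, Set.ncard_diff_singleton_of_mem (s := {m : Λ | J x m}) hx,
      hJ.2.2.2.2.2 x]
    simp

end PP

lemma pg_card_points {P L : Type*} {I : P → L → Prop} {s t a q : ℕ}
    (h : IsPartialGeometry I s t a) (hq : t * s = q * a) (l₀ : L) :
    Nat.card P = (s+1) * (q+1) := by
  haveI : Finite P := h.1
  have h1 := pg_vcount h l₀
  have h2 := h.2.2.2.2.2.2.1 l₀
  have h3 := Set.ncard_add_ncard_compl {p : P | I p l₀} (Set.toFinite _)
  have hcompl : ({p : P | I p l₀}ᶜ : Set P) = {p : P | ¬ I p l₀} := by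
    ext p; simp
  rw [hcompl, h2] at h3
  have ha : 1 ≤ a := h.2.2.2.2.1
  have hw : {p : P | ¬ I p l₀}.ncard = (s+1) * q := by
    have e1 : {p : P | ¬ I p l₀}.ncard * a = ((s+1) * q) * a := by
      rw [h1, hq]; ring
    exact Nat.eq_of_mul_eq_mul_right (by omega) e1
  rw [hw] at h3
  rw [← h3]; ring

def reconInc {P L : Type*} (I : P → L → Prop) (C : Set (Set L)) (C' : Set (Set P)) :
    (P ⊕ ↥C) → (L ⊕ ↥C') → Prop
  | Sum.inl p, Sum.inl l => I p l
  | Sum.inl p, Sum.inr c' => p ∈ c'.1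
  | Sum.inr c, Sum.inl l => l ∈ c.1
  | Sum.inr _, Sum.inr _ => False

section ReconSimp
variable {P L : Type*} {I : P → L → Prop} {C : Set (Set L)} {C' : Set (Set P)}

@[simp] lemma reconInc_ll {p : P} {l : L} : reconInc I C C' (Sum.inl p) (Sum.inl l) ↔ I p l :=
  Iff.rfl
@[simp] lemma reconInc_lc {p : P} {c' : ↥C'} :
    reconInc I C C' (Sum.inl p) (Sum.inr c') ↔ p ∈ c'.1 := Iff.rfl
@[simp] lemma reconInc_cl {c : ↥C} {l : L} :
    reconInc I C C' (Sum.inr c) (Sum.inl l) ↔ l ∈ c.1 := Iff.rfl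
@[simp] lemma reconInc_cc {c : ↥C} {c' : ↥C'} :
    reconInc I C C' (Sum.inr c) (Sum.inr c') ↔ False := Iff.rfl

end ReconSimp

universe u

theorem stmt10 {P L : Type u} {I : P → L → Prop} {d d' : ℕ}
    (hd : 2 ≤ d) (hd' : 2 ≤ d')
    (hG : IsPartialGeometry I (d * (d' - 1)) (d' * (d - 1)) ((d - 1) * (d' - 1))) :
    (∃ (X Λ : Type u) (J : X → Λ → Prop) (A : Set X),
      IsProjectivePlane J (d * d') ∧ IsMaximalArc J (d * d') d A ∧
      ∃ (f : P ≃ TWpoints A) (g : L ≃ TWlines J A),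
        ∀ (p : P) (l : L), I p l ↔ TWinc J A (f p) (g l))
    ↔
    ((∃ C : Set (Set L), C.ncard = d * (d * d' - d' + 1) ∧
        (∀ c ∈ C, IsParallelClass I c) ∧
        (∀ c ∈ C, ∀ c' ∈ C, c ≠ c' → (c ∩ c').ncard = 1)) ∧
     (∃ C' : Set (Set P), C'.ncard = d' * (d * d' - d + 1) ∧
        (∀ c ∈ C', IsParallelClass (fun (l : L) (p : P) => I p l) c) ∧
        (∀ c ∈ C', ∀ c'' ∈ C', c ≠ c'' → (c ∩ c'').ncard = 1))) := by
  constructor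
  · rintro ⟨X, Λ, J, A, hJ, hA, f, g, hfg⟩
    haveI : Finite X := hJ.1
    haveI : Finite Λ := hJ.2.1
    haveI : Fintype X := Fintype.ofFinite X
    haveI : Fintype Λ := Fintype.ofFinite Λ
    have UL : ∀ {x y : X}, x ≠ y →
        ∃ m, (J x m ∧ J y m) ∧ ∀ m', J x m' → J y m' → m' = m := by
      intro x y hxy
      obtain ⟨m, hm, hu⟩ := ncard_one_unique (hJ.2.2.1 x y hxy)
      exact ⟨m, hm, fun m' h1 h2 => hu m' ⟨h1, h2⟩⟩
    have UP : ∀ {m m' : Λ}, m ≠ m' →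
        ∃ x, (J x m ∧ J x m') ∧ ∀ y, J y m → J y m' → y = x := by
      intro m m' hmm
      obtain ⟨x, hx, hu⟩ := ncard_one_unique (hJ.2.2.2.1 m m' hmm)
      exact ⟨x, hx, fun y h1 h2 => hu y ⟨h1, h2⟩⟩
    constructor
    · -- parallel classes from points of the arc
      set cx : X → Set L := fun x => {l : L | J x ((g l) : Λ)} with hcx
      have hpar : ∀ x ∈ A, IsParallelClass I (cx x) := by
        intro x hx
        constructor
        · intro p
          have hne : x ≠ (f p).1 := fun e => (f p).2 (e ▸ hx)
          obtain ⟨m, ⟨hxm, hpm⟩, -⟩ := UL hne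
          refine ⟨g.symm ⟨m, x, hx, hxm⟩, ?_, ?_⟩
          · show J x ((g (g.symm ⟨m, x, hx, hxm⟩)) : Λ)
            rw [Equiv.apply_symm_apply]
            exact hxm
          · rw [hfg]
            show J (f p).1 ((g (g.symm ⟨m, x, hx, hxm⟩)) : Λ)
            rw [Equiv.apply_symm_apply]
            exact hpm
        · rintro l hl l' hl' hll' p ⟨hpl, hpl'⟩
          have h1 : J (f p).1 ((g l : Λ)) := (hfg p l).1 hpl
          have h2 : J (f p).1 ((g l' : Λ)) := (hfg p l').1 hpl'
          have hglne : ((g l) : Λ) ≠ ((g l') : Λ) :=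
            fun e => hll' (g.injective (Subtype.ext e))
          have hne : x ≠ (f p).1 := fun e => (f p).2 (e ▸ hx)
          obtain ⟨m, -, hu⟩ := UL hne
          exact hglne ((hu _ hl h1).trans (hu _ hl' h2).symm)
      have hinj : Set.InjOn cx A := by
        intro x hx y hy hxy2
        by_contra hne
        have htwo : 2 ≤ {m : Λ | J x m}.ncard := by
          rw [hJ.2.2.2.2.2 x]
          have := Nat.le_mul_of_pos_right d (show 0 < d' by omega)
          omega
        obtain ⟨m₁, m₂, hm₁, hm₂, hm12⟩ := exists_pair_of_ncard (Set.toFinite _) htwo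
        have key : ∀ m : Λ, J x m → J y m := by
          intro m hxm
          have hl : g.symm ⟨m, x, hx, hxm⟩ ∈ cx x := by
            show J x ((g (g.symm ⟨m, x, hx, hxm⟩)) : Λ)
            rw [Equiv.apply_symm_apply]
            exact hxm
          rw [hxy2] at hl
          have : J y ((g (g.symm ⟨m, x, hx, hxm⟩)) : Λ) := hl
          rwa [Equiv.apply_symm_apply] at this
        obtain ⟨mm, -, hu⟩ := UL hne
        exact hm12 ((hu m₁ hm₁ (key m₁ hm₁)).trans (hu m₂ hm₂ (key m₂ hm₂)).symm)
      refine ⟨cx '' A, ?_, ?_, ?_⟩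
      · rw [Set.ncard_image_of_injOn hinj, hA.1]
        have g1 : d' ≤ d * d' := Nat.le_mul_of_pos_left d' (by omega)
        have g2 : d * d' ≤ d * (d * d') := Nat.le_mul_of_pos_left (d * d') (by omega)
        zify [g1, g2]
        ring
      · rintro c ⟨x, hx, rfl⟩
        exact hpar x hx
      · rintro c ⟨x, hx, rfl⟩ c' ⟨y, hy, rfl⟩ hne
        have hxy : x ≠ y := fun e => hne (e ▸ rfl)
        obtain ⟨m, ⟨hxm, hym⟩, hu⟩ := UL hxy
        refine ncard_unique (x := g.symm ⟨m, x, hx, hxm⟩) ⟨?_, ?_⟩ ?_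
        · show J x ((g (g.symm ⟨m, x, hx, hxm⟩)) : Λ)
          rw [Equiv.apply_symm_apply]
          exact hxm
        · show J y ((g (g.symm ⟨m, x, hx, hxm⟩)) : Λ)
          rw [Equiv.apply_symm_apply]
          exact hym
        · rintro l ⟨h1, h2⟩
          apply g.injective
          rw [Equiv.apply_symm_apply]
          exact Subtype.ext (hu _ h1 h2)
    · -- dual parallel classes from exterior lines
      set Sec : Set Λ := {m : Λ | ∃ x ∈ A, J x m} with hSec
      set Ext : Set Λ := {m : Λ | ∀ x ∈ A, ¬ J x m} with hExt
      set cm : Λ → Set P := fun m => {p : P | J ((f p) : X) m} with hcm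
      have hApos : 0 < A.ncard := by
        rw [hA.1]
        have : d * d' ≤ d * (d * d') := Nat.le_mul_of_pos_left (d * d') (by omega)
        have h2 : 2 ≤ d * d' := le_trans hd (Nat.le_mul_of_pos_right d (by omega))
        omega
      obtain ⟨x₀, hx₀⟩ := Set.nonempty_of_ncard_ne_zero (s := A) (by omega)
      have hsecant : ∀ {x : X}, x ∈ A → ∀ {m : Λ}, J x m → {y ∈ A | J y m}.ncard = d := by
        intro x hx m hxm
        rcases hA.2 m with h | h
        · exact absurd hxm (h x hx)
        · exact h
      -- each exterior line gives a dual parallel class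
      have hpar : ∀ m ∈ Ext, IsParallelClass (fun (l : L) (p : P) => I p l) (cm m) := by
        intro m hm
        constructor
        · intro l
          have hglm : ((g l) : Λ) ≠ m := by
            obtain ⟨x, hxA, hxgl⟩ := (g l).2
            exact fun e => hm x hxA (e ▸ hxgl)
          obtain ⟨x, ⟨hx1, hx2⟩, -⟩ := UP hglm
          have hxA : x ∉ A := fun hxA => hm x hxA hx2
          refine ⟨f.symm ⟨x, hxA⟩, ?_, ?_⟩
          · show J ((f (f.symm ⟨x, hxA⟩)) : X) m
            rw [Equiv.apply_symm_apply]
            exact hx2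
          · show I (f.symm ⟨x, hxA⟩) l
            rw [hfg]
            show J ((f (f.symm ⟨x, hxA⟩)) : X) ((g l) : Λ)
            rw [Equiv.apply_symm_apply]
            exact hx1
        · rintro p hp p' hp' hpp' l ⟨hpl, hp'l⟩
          have h1 : J ((f p) : X) ((g l) : Λ) := (hfg p l).1 hpl
          have h2 : J ((f p') : X) ((g l) : Λ) := (hfg p' l).1 hp'l
          have hfne : ((f p) : X) ≠ ((f p') : X) :=
            fun e => hpp' (f.injective (Subtype.ext e))
          have hglm : ((g l) : Λ) ≠ m := by
            obtain ⟨x, hxA, hxgl⟩ := (g l).2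
            exact fun e => hm x hxA (e ▸ hxgl)
          obtain ⟨x, -, hu⟩ := UP hglm
          exact hfne ((hu _ h1 hp) |>.trans (hu _ h2 hp').symm)
      have hinj : Set.InjOn cm Ext := by
        intro m hm m' hm' hmm2
        by_contra hne
        have htwo : 2 ≤ {x : X | J x m}.ncard := by
          rw [hJ.2.2.2.2.1 m]
          have h2 : 2 ≤ d * d' := le_trans hd (Nat.le_mul_of_pos_right d (by omega))
          omega
        obtain ⟨x₁, x₂, hx₁, hx₂, hx12⟩ := exists_pair_of_ncard (Set.toFinite _) htwo
        have key : ∀ x : X, J x m → J x m' := by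
          intro x hxm
          have hxA : x ∉ A := fun hxA => hm x hxA hxm
          have hp : f.symm ⟨x, hxA⟩ ∈ cm m := by
            show J ((f (f.symm ⟨x, hxA⟩)) : X) m
            rw [Equiv.apply_symm_apply]
            exact hxm
          rw [hmm2] at hp
          have : J ((f (f.symm ⟨x, hxA⟩)) : X) m' := hp
          rwa [Equiv.apply_symm_apply] at this
        obtain ⟨xx, -, hu⟩ := UP hne
        exact hx12 ((hu x₁ hx₁ (key x₁ hx₁)).trans (hu x₂ hx₂ (key x₂ hx₂)).symm)
      -- count exterior lines
      have hcompl : Ext = Secᶜ := by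
        ext m
        simp only [hSec, hExt, Set.mem_compl_iff, Set.mem_setOf_eq, not_exists]
        tauto
      have hsum : Sec.ncard + Ext.ncard = Nat.card Λ := by
        rw [hcompl]
        exact Set.ncard_add_ncard_compl _ (Set.toFinite _)
      have hl₀ : ∃ m : Λ, J x₀ m := by
        have := hJ.2.2.2.2.2 x₀
        obtain ⟨m, hm⟩ := Set.nonempty_of_ncard_ne_zero (by omega : {m : Λ | J x₀ m}.ncard ≠ 0)
        exact ⟨m, hm⟩
      obtain ⟨l₀, -⟩ := hl₀
      have hcardΛ := pp_card_lines hJ l₀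
      have SecV : A.ncard * (d*d'+1) = Sec.ncard * d := by
        refine dc_mul A Sec (fun x m => J x m) (d*d'+1) d ?_ ?_
        · intro x hx
          have : {m : Λ | m ∈ Sec ∧ J x m} = {m : Λ | J x m} := by
            ext m
            simp only [Set.mem_setOf_eq, hSec]
            exact ⟨fun h => h.2, fun h => ⟨⟨x, hx, h⟩, h⟩⟩
          rw [this]
          exact hJ.2.2.2.2.2 x
        · rintro m hm
          obtain ⟨x, hx, hxm⟩ := hm
          have := hsecant hx hxm
          rw [← this]
      have hExtCard : Ext.ncard = d' * (d * d' - d + 1) := by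
        have g1 : d * d' ≤ d * (d * d') := Nat.le_mul_of_pos_left (d * d') (by omega)
        have g2 : d ≤ d * d' := Nat.le_mul_of_pos_right d (by omega)
        have zS : ((Sec.ncard : ℤ)) * d
            = ((d:ℤ)*(d*d') - d*d' + d) * ((d:ℤ)*d'+1) := by
          have := SecV
          rw [hA.1] at this
          zify [g1] at this
          linarith
        have zsum : ((Sec.ncard : ℤ)) + Ext.ncard
            = ((d:ℤ)*d')*((d:ℤ)*d') + (d:ℤ)*d' + 1 := by
          rw [hcardΛ] at hsum
          exact_mod_cast hsum
        have hd0 : (d:ℤ) ≠ 0 := by positivity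
        have hmul : (d:ℤ) * Ext.ncard = (d:ℤ) * ((d':ℤ) * ((d:ℤ)*d' - d + 1)) := by
          linear_combination (d:ℤ) * zsum - zS
        have := mul_left_cancel₀ hd0 hmul
        zify [g2]
        linarith
      refine ⟨cm '' Ext, ?_, ?_, ?_⟩
      · rw [Set.ncard_image_of_injOn hinj, hExtCard]
      · rintro c ⟨m, hm, rfl⟩
        exact hpar m hm
      · rintro c ⟨m, hm, rfl⟩ c' ⟨m', hm', rfl⟩ hne
        have hmm : m ≠ m' := fun e => hne (e ▸ rfl)
        obtain ⟨x, ⟨hx1, hx2⟩, hu⟩ := UP hmm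
        have hxA : x ∉ A := fun hxA => hm x hxA hx1
        refine ncard_unique (x := f.symm ⟨x, hxA⟩) ⟨?_, ?_⟩ ?_
        · show J ((f (f.symm ⟨x, hxA⟩)) : X) m
          rw [Equiv.apply_symm_apply]
          exact hx1
        · show J ((f (f.symm ⟨x, hxA⟩)) : X) m'
          rw [Equiv.apply_symm_apply]
          exact hx2
        · rintro p ⟨h1, h2⟩
          apply f.injective
          rw [Equiv.apply_symm_apply]
          exact Subtype.ext (hu _ h1 h2)
  · rintro ⟨⟨C, hCcard, hCpar, hCorth⟩, ⟨C', hC'card, hC'par, hC'orth⟩⟩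
    obtain ⟨e, he, rfl⟩ : ∃ e, 1 ≤ e ∧ d = e + 1 := ⟨d - 1, by omega, by omega⟩
    obtain ⟨e', he', rfl⟩ : ∃ e'', 1 ≤ e'' ∧ d' = e'' + 1 := ⟨d' - 1, by omega, by omega⟩
    simp only [Nat.add_sub_cancel] at hG
    rw [show (e+1)*(e'+1) - (e'+1) + 1 = e*(e'+1)+1 by rw [Nat.succ_mul, Nat.add_sub_cancel]]
      at hCcard
    rw [show (e+1)*(e'+1) - (e+1) + 1 = (e+1)*e'+1 by rw [Nat.mul_succ, Nat.add_sub_cancel]]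
      at hC'card
    haveI : Finite P := hG.1
    haveI : Finite L := hG.2.1
    set s : ℕ := (e+1)*e' with hs
    set t : ℕ := (e'+1)*e with ht
    set a : ℕ := e*e' with haa
    set q : ℕ := (e+1)*(e'+1) with hq
    have hGd := pg_dual hG
    -- a line exists
    have hL : Nonempty L := by
      by_contra h
      haveI := not_nonempty_iff.1 h
      have hCtwo : 2 ≤ C.ncard := by
        rw [hCcard]
        have := Nat.le_mul_of_pos_right (e+1) (show 0 < e*(e'+1)+1 by omega)
        omega
      obtain ⟨c₁, c₂, -, -, hne⟩ := exists_pair_of_ncard (Set.toFinite _) hCtwo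
      exact hne (funext fun x => (IsEmpty.false x).elim)
    obtain ⟨l₀⟩ := hL
    have hP : Nonempty P := by
      have := hG.2.2.2.2.2.2.1 l₀
      obtain ⟨p, -⟩ := Set.nonempty_of_ncard_ne_zero
        (show {p : P | I p l₀}.ncard ≠ 0 by omega)
      exact ⟨p⟩
    obtain ⟨p₀⟩ := hP
    -- cardinalities
    have hv : Nat.card P = (s+1) * (q+1) :=
      pg_card_points hG (by rw [ht, hs, haa, hq]; ring) l₀
    have hb : Nat.card L = (t+1) * (q+1) :=
      pg_card_points hGd (by rw [ht, hs, haa, hq]; ring) p₀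
    -- class sizes
    have hsize : ∀ c ∈ C, c.ncard = q + 1 := by
      intro c hc
      have h1 := pg_class_count hG (hCpar c hc)
      rw [hv, mul_comm (s+1)] at h1
      exact Nat.eq_of_mul_eq_mul_right (show 0 < s+1 by omega) h1
    have hsize' : ∀ c ∈ C', c.ncard = q + 1 := by
      intro c hc
      have h1 := pg_class_count hGd (hC'par c hc)
      rw [hb, mul_comm (t+1)] at h1
      exact Nat.eq_of_mul_eq_mul_right (show 0 < t+1 by omega) h1
    haveI : Fintype P := Fintype.ofFinite P
    haveI : Fintype L := Fintype.ofFinite L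
    -- regularity
    have hreg : ∀ l : L, {c ∈ C | l ∈ c}.ncard = e + 1 := by
      refine classes_regular C (q+1) (e+1) hsize hCorth ?_
      rw [hCcard, ← Nat.card_eq_fintype_card, hb, ht, hq]
      ring
    have hreg' : ∀ p : P, {c ∈ C' | p ∈ c}.ncard = e' + 1 := by
      refine classes_regular C' (q+1) (e'+1) hsize' hC'orth ?_
      rw [hC'card, ← Nat.card_eq_fintype_card, hv, hs, hq]
      ring
    -- classes through pairs of disjoint lines
    have hBex : ∀ {l m : L}, l ≠ m → (∀ p, ¬ (I p l ∧ I p m)) →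
        ∃ c ∈ C, l ∈ c ∧ m ∈ c := by
      intro l m hlm hdisj
      refine class_of_disjoint hG C q (e+1) hCpar hsize hCorth hreg ?_ hlm hdisj
      rw [hb, hs, ht, hq]
      ring
    have hBex' : ∀ {p p' : P}, p ≠ p' → (∀ l, ¬ (I p l ∧ I p' l)) →
        ∃ c ∈ C', p ∈ c ∧ p' ∈ c := by
      intro p p' hpp hdisj
      refine class_of_disjoint hGd C' q (e'+1) hC'par hsize' hC'orth hreg' ?_ hpp
        (fun l => by have := hdisj l; tauto)
      rw [hv, hs, ht, hq]
      ring
    -- reconstruction of the projective plane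
    haveI : Finite ↥C := Set.Finite.to_subtype (Set.toFinite C)
    haveI : Finite ↥C' := Set.Finite.to_subtype (Set.toFinite C')
    refine ⟨P ⊕ ↥C, L ⊕ ↥C', reconInc I C C',
      Set.range (Sum.inr : ↥C → P ⊕ ↥C), ⟨?_, ?_, ?_, ?_, ?_, ?_⟩, ⟨?_, ?_⟩, ?_⟩
    · infer_instance
    · infer_instance
    · -- two points lie on a unique line
      rintro (p | c) (p' | c₂) hxy
      · have hpp : p ≠ p' := fun h => hxy (h ▸ rfl)
        by_cases hcol : ∃ l, I p l ∧ I p' l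
        · obtain ⟨l₁, hl₁, hl₁'⟩ := hcol
          refine ncard_unique (x := Sum.inl l₁) ⟨hl₁, hl₁'⟩ ?_
          rintro (l | c'') ⟨h1, h2⟩
          · have : l = l₁ := eq_of_ncard_le_one (Set.toFinite _)
              (hG.2.2.2.2.2.1 p p' hpp)
              (⟨h1, h2⟩ : l ∈ {l : L | I p l ∧ I p' l}) ⟨hl₁, hl₁'⟩
            rw [this]
          · exact ((hC'par c''.1 c''.2).2 p h1 p' h2 hpp l₁ ⟨hl₁, hl₁'⟩).elim
        · obtain ⟨c₁, hc₁, hp1, hp2⟩ := hBex' hpp (fun l hl => hcol ⟨l, hl⟩)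
          refine ncard_unique (x := Sum.inr ⟨c₁, hc₁⟩) ⟨hp1, hp2⟩ ?_
          rintro (l | c'') ⟨h1, h2⟩
          · exact (hcol ⟨l, h1, h2⟩).elim
          · have : c''.1 = c₁ := by
              by_contra hne2
              have horth1 := hC'orth c''.1 c''.2 c₁ hc₁ hne2
              exact hpp (eq_of_ncard_le_one (Set.toFinite _) horth1.le
                (⟨h1, hp1⟩ : p ∈ c''.1 ∩ c₁) ⟨h2, hp2⟩)
            rw [show c'' = (⟨c₁, hc₁⟩ : ↥C') from Subtype.ext this]
      · -- point and arc-point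
        obtain ⟨l₁, hl₁c, hpl₁⟩ := (hCpar c₂.1 c₂.2).1 p
        refine ncard_unique (x := Sum.inl l₁) ⟨hpl₁, hl₁c⟩ ?_
        rintro (l | c'') ⟨h1, h2⟩
        · have : l = l₁ := by
            by_contra hll
            exact (hCpar c₂.1 c₂.2).2 l h2 l₁ hl₁c hll p ⟨h1, hpl₁⟩
          rw [this]
        · exact h2.elim
      · obtain ⟨l₁, hl₁c, hpl₁⟩ := (hCpar c.1 c.2).1 p'
        refine ncard_unique (x := Sum.inl l₁) ⟨hl₁c, hpl₁⟩ ?_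
        rintro (l | c'') ⟨h1, h2⟩
        · have : l = l₁ := by
            by_contra hll
            exact (hCpar c.1 c.2).2 l h1 l₁ hl₁c hll p' ⟨h2, hpl₁⟩
          rw [this]
        · exact h1.elim
      · have hvne : c.1 ≠ c₂.1 := fun h => hxy (by rw [Subtype.ext h])
        obtain ⟨l₁, hl₁, hu⟩ := ncard_one_unique (hCorth c.1 c.2 c₂.1 c₂.2 hvne)
        refine ncard_unique (x := Sum.inl l₁) ⟨hl₁.1, hl₁.2⟩ ?_
        rintro (l | c'') ⟨h1, h2⟩
        · rw [hu l ⟨h1, h2⟩]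
        · exact h1.elim
    · -- two lines meet in a unique point
      rintro (l | c') (l₂ | c₂') hxy
      · have hll : l ≠ l₂ := fun h => hxy (h ▸ rfl)
        by_cases hcon : ∃ p, I p l ∧ I p l₂
        · obtain ⟨p₁, hp₁, hp₁'⟩ := hcon
          refine ncard_unique (x := Sum.inl p₁) ⟨hp₁, hp₁'⟩ ?_
          rintro (p | c) ⟨h1, h2⟩
          · rw [pg_two_lines hG hll h1 h2 hp₁ hp₁']
          · exact ((hCpar c.1 c.2).2 l h1 l₂ h2 hll p₁ ⟨hp₁, hp₁'⟩).elim
        · obtain ⟨c₁, hc₁, hl1, hl2⟩ := hBex hll (fun p hp => hcon ⟨p, hp⟩)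
          refine ncard_unique (x := Sum.inr ⟨c₁, hc₁⟩) ⟨hl1, hl2⟩ ?_
          rintro (p | c) ⟨h1, h2⟩
          · exact (hcon ⟨p, h1, h2⟩).elim
          · have : c.1 = c₁ := by
              by_contra hne2
              have horth1 := hCorth c.1 c.2 c₁ hc₁ hne2
              exact hll (eq_of_ncard_le_one (Set.toFinite _) horth1.le
                (⟨h1, hl1⟩ : l ∈ c.1 ∩ c₁) ⟨h2, hl2⟩)
            rw [show c = (⟨c₁, hc₁⟩ : ↥C) from Subtype.ext this]
      · obtain ⟨p₁, hp₁c, hp₁l⟩ := (hC'par c₂'.1 c₂'.2).1 l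
        refine ncard_unique (x := Sum.inl p₁) ⟨hp₁l, hp₁c⟩ ?_
        rintro (p | c) ⟨h1, h2⟩
        · have : p = p₁ := by
            by_contra hpp
            exact (hC'par c₂'.1 c₂'.2).2 p h2 p₁ hp₁c hpp l ⟨h1, hp₁l⟩
          rw [this]
        · exact h2.elim
      · obtain ⟨p₁, hp₁c, hp₁l⟩ := (hC'par c'.1 c'.2).1 l₂
        refine ncard_unique (x := Sum.inl p₁) ⟨hp₁c, hp₁l⟩ ?_
        rintro (p | c) ⟨h1, h2⟩
        · have : p = p₁ := by
            by_contra hpp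
            exact (hC'par c'.1 c'.2).2 p h1 p₁ hp₁c hpp l₂ ⟨h2, hp₁l⟩
          rw [this]
        · exact h1.elim
      · have hvne : c'.1 ≠ c₂'.1 := fun h => hxy (by rw [Subtype.ext h])
        obtain ⟨p₁, hp₁, hu⟩ := ncard_one_unique (hC'orth c'.1 c'.2 c₂'.1 c₂'.2 hvne)
        refine ncard_unique (x := Sum.inl p₁) ⟨hp₁.1, hp₁.2⟩ ?_
        rintro (p | c) ⟨h1, h2⟩
        · rw [hu p ⟨h1, h2⟩]
        · exact h1.elim
    · -- every line has q+1 points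
      rintro (l | c')
      · have hdecomp : {x : P ⊕ ↥C | reconInc I C C' x (Sum.inl l)}
            = Sum.inl '' {p : P | I p l} ∪ Sum.inr '' {c : ↥C | l ∈ c.1} := by
          ext (p | c) <;> simp
        have hsub : {c : ↥C | l ∈ c.1}.ncard = e + 1 := by
          rw [← hreg l, ← Set.ncard_image_of_injective _ Subtype.val_injective]
          congr 1
          ext c
          constructor
          · rintro ⟨⟨c₀, hc₀⟩, hl, rfl⟩
            exact ⟨hc₀, hl⟩
          · rintro ⟨hcC, hl⟩
            exact ⟨⟨c, hcC⟩, hl, rfl⟩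
        rw [hdecomp, Set.ncard_union_eq ?_ (Set.toFinite _) (Set.toFinite _),
          Set.ncard_image_of_injective _ Sum.inl_injective,
          Set.ncard_image_of_injective _ Sum.inr_injective,
          hG.2.2.2.2.2.2.1 l, hsub]
        · rw [hs, hq]; ring
        · rw [Set.disjoint_left]
          rintro x ⟨p, -, rfl⟩ ⟨c, -, h⟩
          cases h
      · have hdecomp : {x : P ⊕ ↥C | reconInc I C C' x (Sum.inr c')}
            = Sum.inl '' c'.1 := by
          ext (p | c) <;> simp
        rw [hdecomp, Set.ncard_image_of_injective _ Sum.inl_injective, hsize' c'.1 c'.2]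
    · -- every point is on q+1 lines
      rintro (p | c)
      · have hdecomp : {m : L ⊕ ↥C' | reconInc I C C' (Sum.inl p) m}
            = Sum.inl '' {l : L | I p l} ∪ Sum.inr '' {c' : ↥C' | p ∈ c'.1} := by
          ext (l | c') <;> simp
        have hsub : {c' : ↥C' | p ∈ c'.1}.ncard = e' + 1 := by
          rw [← hreg' p, ← Set.ncard_image_of_injective _ Subtype.val_injective]
          congr 1
          ext c'
          constructor
          · rintro ⟨⟨c₀, hc₀⟩, hl, rfl⟩
            exact ⟨hc₀, hl⟩
          · rintro ⟨hcC, hl⟩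
            exact ⟨⟨c', hcC⟩, hl, rfl⟩
        rw [hdecomp, Set.ncard_union_eq ?_ (Set.toFinite _) (Set.toFinite _),
          Set.ncard_image_of_injective _ Sum.inl_injective,
          Set.ncard_image_of_injective _ Sum.inr_injective,
          hG.2.2.2.2.2.2.2.1 p, hsub]
        · rw [ht, hq]; ring
        · rw [Set.disjoint_left]
          rintro x ⟨l, -, rfl⟩ ⟨c', -, h⟩
          cases h
      · have hdecomp : {m : L ⊕ ↥C' | reconInc I C C' (Sum.inr c) m}
            = Sum.inl '' c.1 := by
          ext (l | c') <;> simp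
        rw [hdecomp, Set.ncard_image_of_injective _ Sum.inl_injective, hsize c.1 c.2]
    · -- arc cardinality
      rw [← Set.image_univ, Set.ncard_image_of_injective _ Sum.inr_injective,
        Set.ncard_univ, Nat.card_coe_set_eq, hCcard]
      have g1 : (e+1)*(e'+1) ≤ (e+1)*((e+1)*(e'+1)) :=
        Nat.le_mul_of_pos_left _ (by omega)
      show (e + 1) * (e * (e' + 1) + 1)
        = (e+1) * ((e+1)*(e'+1)) - (e+1)*(e'+1) + (e+1)
      zify [g1]
      ring
    · -- arc intersection condition
      rintro (l | c')
      · right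
        have hdecomp : {x ∈ Set.range (Sum.inr : ↥C → P ⊕ ↥C) |
            reconInc I C C' x (Sum.inl l)} = Sum.inr '' {c : ↥C | l ∈ c.1} := by
          ext (p | c) <;> simp
        rw [hdecomp, Set.ncard_image_of_injective _ Sum.inr_injective]
        rw [← hreg l, ← Set.ncard_image_of_injective _ Subtype.val_injective]
        congr 1
        ext c
        constructor
        · rintro ⟨⟨c₀, hc₀⟩, hl, rfl⟩
          exact ⟨hc₀, hl⟩
        · rintro ⟨hcC, hl⟩
          exact ⟨⟨c, hcC⟩, hl, rfl⟩
      · left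
        rintro x ⟨c, rfl⟩ h
        exact h
    · -- the isomorphism
      have hginh : ∀ l : L, ∃ x ∈ Set.range (Sum.inr : ↥C → P ⊕ ↥C),
          reconInc I C C' x (Sum.inl l) := by
        intro l
        obtain ⟨c, hc⟩ := Set.nonempty_of_ncard_ne_zero
          (show ({c ∈ C | l ∈ c} : Set (Set L)).ncard ≠ 0 by rw [hreg l]; omega)
        exact ⟨Sum.inr ⟨c, hc.1⟩, ⟨⟨c, hc.1⟩, rfl⟩, hc.2⟩
      have hf : Function.Bijective
          (fun p : P => (⟨Sum.inl p, by simp⟩ :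
            TWpoints (Set.range (Sum.inr : ↥C → P ⊕ ↥C)))) := by
        constructor
        · intro p p' h
          exact Sum.inl_injective (congrArg Subtype.val h)
        · rintro ⟨x, hx⟩
          rcases x with p | c
          · exact ⟨p, rfl⟩
          · exact absurd ⟨c, rfl⟩ hx
      have hg : Function.Bijective
          (fun l : L => (⟨Sum.inl l, hginh l⟩ :
            TWlines (reconInc I C C') (Set.range (Sum.inr : ↥C → P ⊕ ↥C)))) := by
        constructor
        · intro l l' h
          exact Sum.inl_injective (congrArg Subtype.val h)
        · rintro ⟨m, hm⟩
          rcases m with l | c'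
          · exact ⟨l, rfl⟩
          · obtain ⟨x, ⟨c, rfl⟩, hK⟩ := hm
            exact hK.elim
      exact ⟨Equiv.ofBijective _ hf, Equiv.ofBijective _ hg, fun p l => Iff.rfl⟩
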